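/- Let h ∈ (0,1/4], λ = h/(1+8h)^{3/2}, and W_λ(x) = (λ/2)·((1 - ((1+8h)/h)x)·√(1 - 4(1+8h)x) - 1 + x/λ). Then the coefficient of x^1 in W_λ equals w_λ(1) = 1/2 - (1+2h)/(2√(1+8h)), and for p ≥ 2 the coefficient of x^p equals w_λ(p) = (2+16h)^p · ((2p-5)!!/p!) · ((1-4h)p + 6h)/(4(1+8h)^{3/2}). -/

import Mathlib

/-- The generating function `W_λ(x)` in closed form, with `λ` given explicitly. -/
noncomputable def Wfun (h lam x : ℝ) : ℝ :=
  (lam / 2) * ((1 - ((1 + 8*h)/h) * x) * Real.sqrt (1 - 4*(1 + 8*h)*x) - 1 + x / lam)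

/-- The coefficients `w_λ(p)`: `w_λ(0)=0`, `w_λ(1) = 1/2 - (1+2h)/(2√(1+8h))`, and for `p ≥ 2`,
`w_λ(p) = (2+16h)^p ((2p-5)!!/p!) ((1-4h)p+6h)/(4(1+8h)^{3/2})`, with `(-1)!! = 1`. -/
noncomputable def wcoef (h : ℝ) (p : ℕ) : ℝ :=
  if p = 0 then 0
  else if p = 1 then 1/2 - (1 + 2*h) / (2 * Real.sqrt (1 + 8*h))
  else (2 + 16*h)^p *
    ((if p = 2 then 1 else (Nat.doubleFactorial (2*p - 5) : ℝ)) / (Nat.factorial p : ℝ)) *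
    ((1 - 4*h) * p + 6*h) / (4 * (1 + 8*h) ^ ((3 : ℝ)/2))

/-! ### Auxiliary: the binomial series for `√(1-t)` -/

noncomputable def aa : ℕ → ℝ
  | 0 => 1
  | (p+1) => ((2*(p:ℝ)-1)/(2*(p:ℝ)+2)) * aa p

lemma aa_zero : aa 0 = 1 := rfl

lemma aa_one : aa 1 = -(1/2) := by norm_num [aa]

lemma aa_rec (k : ℕ) : 2*((k:ℝ)+1) * aa (k+1) = (2*(k:ℝ)-1) * aa k := by
  have h : (2*(k:ℝ)+2) ≠ 0 := by positivity
  rw [show aa (k+1) = ((2*(k:ℝ)-1)/(2*(k:ℝ)+2)) * aa k from rfl]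
  field_simp

lemma aa_bounds : ∀ p : ℕ, |aa p| ≤ 1 ∧ (1 ≤ p → |aa p| ≤ 1/2) := by
  intro p
  induction p with
  | zero => simp [aa]
  | succ n ih =>
    have hstep : |aa (n+1)| ≤ |aa n| := by
      rw [show aa (n+1) = ((2*(n:ℝ)-1)/(2*(n:ℝ)+2)) * aa n from rfl, abs_mul]
      have h1 : |(2*(n:ℝ)-1)/(2*(n:ℝ)+2)| ≤ 1 := by
        rw [abs_div]
        rw [div_le_one (by positivity)]
        rw [abs_of_pos (by positivity : (0:ℝ) < 2*(n:ℝ)+2)]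
        cases' abs_cases (2*(n:ℝ)-1) with h h <;> nlinarith [h.1, Nat.cast_nonneg (α := ℝ) n]
      nlinarith [abs_nonneg (aa n), h1, ih.1]
    constructor
    · exact hstep.trans ih.1
    · intro _
      cases n with
      | zero =>
        rw [aa_one, abs_neg, abs_of_nonneg] <;> norm_num
        
      | succ m => exact hstep.trans (ih.2 (Nat.succ_le_succ (Nat.zero_le m)))

lemma dfac_step (p : ℕ) (hp : 1 ≤ p) :
    (Nat.doubleFactorial (2*(p+1)-3)) = (2*p-1) * Nat.doubleFactorial (2*p-3) := by
  rcases p with _ | _ | m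
  · omega
  · simp [Nat.doubleFactorial]
  · have h1 : 2*(m+2+1)-3 = (2*m+1)+2 := by omega
    have h2 : 2*(m+2)-3 = 2*m+1 := by omega
    rw [h1, h2, Nat.doubleFactorial_add_two]
    have h3 : 2*(m+2)-1 = 2*m+1+2 := by omega
    rw [h3]

lemma aa_closed (p : ℕ) (hp : 1 ≤ p) :
    aa p = -((Nat.doubleFactorial (2*p-3) : ℝ)) / (2^p * (Nat.factorial p)) := by
  induction p with
  | zero => omega
  | succ n ih =>
    rcases Nat.eq_or_lt_of_le hp with h1 | h1
    · obtain rfl : n = 0 := by omega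
      norm_num [aa, Nat.doubleFactorial]
    · have hn : 1 ≤ n := by omega
      have hd := dfac_step n hn
      have hfn : (Nat.factorial n : ℝ) ≠ 0 := Nat.cast_ne_zero.mpr (Nat.factorial_ne_zero n)
      have h2n : (2:ℝ)^n ≠ 0 := by positivity
      have hden : (2*(n:ℝ)+2) ≠ 0 := by positivity
      have hcast : (((2*n-1) : ℕ) : ℝ) = 2*(n:ℝ)-1 := by
        push_cast [Nat.cast_sub (show 1 ≤ 2*n by omega)]
        ring
      rw [show aa (n+1) = ((2*(n:ℝ)-1)/(2*(n:ℝ)+2)) * aa n from rfl, ih hn, hd]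
      rw [Nat.cast_mul, hcast, Nat.factorial_succ, Nat.cast_mul, pow_succ]
      push_cast
      field_simp

noncomputable def SS (n : ℕ) : ℝ := ∑ k ∈ Finset.range (n+1), aa k * aa (n-k)

lemma SS_sym (n : ℕ) :
    2 * (∑ k ∈ Finset.range (n+1), (k:ℝ) * (aa k * aa (n-k))) = n * SS n := by
  have h2 : ∑ k ∈ Finset.range (n+1), (k:ℝ) * (aa k * aa (n-k))
      = ∑ j ∈ Finset.range (n+1), ((n:ℝ) - j) * (aa j * aa (n-j)) := by
    rw [← Finset.sum_range_reflect (fun k => (k:ℝ) * (aa k * aa (n-k))) (n+1)]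
    apply Finset.sum_congr rfl
    intro j hj
    have hj' : j ≤ n := by simpa [Nat.lt_succ_iff] using hj
    have e1 : n + 1 - 1 - j = n - j := by omega
    simp only [e1, Nat.sub_sub_self hj', Nat.cast_sub hj']
    ring
  rw [SS, two_mul]
  nth_rewrite 2 [h2]
  rw [← Finset.sum_add_distrib, Finset.mul_sum]
  apply Finset.sum_congr rfl
  intro j hj
  ring

lemma SS_rec (n : ℕ) : ((n:ℝ)+1) * SS (n+1) = ((n:ℝ)-1) * SS n := by
  have hsym1 := SS_sym (n+1)
  have hsym0 := SS_sym n
  have hshift : ∑ k ∈ Finset.range (n+2), (k:ℝ) * (aa k * aa (n+1-k))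
      = ∑ i ∈ Finset.range (n+1), ((i:ℝ)+1) * (aa (i+1) * aa (n-i)) := by
    rw [Finset.sum_range_succ' (fun k => (k:ℝ) * (aa k * aa (n+1-k))) (n+1)]
    simp [Nat.succ_sub_succ]
  have key : 2 * ∑ i ∈ Finset.range (n+1), ((i:ℝ)+1) * (aa (i+1) * aa (n-i))
      = ∑ i ∈ Finset.range (n+1), (2*(i:ℝ)-1) * (aa i * aa (n-i)) := by
    rw [Finset.mul_sum]
    apply Finset.sum_congr rfl
    intro i hi
    linear_combination aa (n-i) * aa_rec i
  have expand : ∑ i ∈ Finset.range (n+1), (2*(i:ℝ)-1) * (aa i * aa (n-i))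
      = 2 * (∑ k ∈ Finset.range (n+1), (k:ℝ) * (aa k * aa (n-k))) - SS n := by
    rw [SS, Finset.mul_sum, ← Finset.sum_sub_distrib]
    apply Finset.sum_congr rfl
    intro i hi
    ring
  push_cast at hsym1
  rw [hshift] at hsym1
  linarith [hsym1, key, expand, hsym0]

lemma SS_zero : SS 0 = 1 := by norm_num [SS, aa]

lemma SS_one : SS 1 = -1 := by
  norm_num [SS, Finset.sum_range_succ, aa]

lemma SS_ge_two (n : ℕ) (hn : 2 ≤ n) : SS n = 0 := by
  induction n with
  | zero => omega
  | succ m ih =>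
    rcases Nat.lt_or_ge m 2 with h | h
    · have hm : m = 1 := by omega
      subst hm
      have := SS_rec 1
      rw [SS_one] at this
      norm_num at this
      linarith
    · have h0 := SS_rec m
      rw [ih h] at h0
      have hm1 : ((m:ℝ)+1) ≠ 0 := by positivity
      have := mul_eq_zero.mp (by linarith : ((m:ℝ)+1) * SS (m+1) = 0)
      exact this.resolve_left hm1

lemma aa_norm_summable {t : ℝ} (ht : |t| < 1) :
    Summable (fun p : ℕ => ‖aa p * t^p‖) := by
  apply Summable.of_nonneg_of_le (fun p => norm_nonneg _)
    (fun p => ?_) (summable_geometric_of_lt_one (abs_nonneg t) ht)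
  rw [Real.norm_eq_abs, abs_mul, abs_pow]
  calc |aa p| * |t|^p ≤ 1 * |t|^p := by
        apply mul_le_mul_of_nonneg_right (aa_bounds p).1 (by positivity)
    _ = |t|^p := one_mul _

lemma aa_summable {t : ℝ} (ht : |t| < 1) : Summable (fun p : ℕ => aa p * t^p) :=
  (aa_norm_summable ht).of_norm

lemma g_sq {t : ℝ} (ht : |t| ≤ 1/2) :
    (∑' p : ℕ, aa p * t^p) * (∑' p : ℕ, aa p * t^p) = 1 - t := by
  have ht1 : |t| < 1 := lt_of_le_of_lt ht (by norm_num)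
  rw [tsum_mul_tsum_eq_tsum_sum_range_of_summable_norm (aa_norm_summable ht1)
    (aa_norm_summable ht1)]
  have hinner : ∀ n : ℕ, (∑ k ∈ Finset.range (n+1), (aa k * t^k) * (aa (n-k) * t^(n-k)))
      = SS n * t^n := by
    intro n
    rw [SS, Finset.sum_mul]
    apply Finset.sum_congr rfl
    intro k hk
    have hk' : k ≤ n := by simpa [Nat.lt_succ_iff] using hk
    have : t^k * t^(n-k) = t^n := by
      rw [← pow_add]
      congr 1
      omega
    calc (aa k * t^k) * (aa (n-k) * t^(n-k)) = (aa k * aa (n-k)) * (t^k * t^(n-k)) := by ring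
      _ = aa k * aa (n-k) * t^n := by rw [this]
  simp_rw [hinner]
  have hfun : ∀ n : ℕ, SS n * t^n
      = (if n = 0 then (1:ℝ) else 0) + (if n = 1 then (-t) else 0) := by
    intro n
    rcases n with _ | _ | m
    · simp [SS_zero]
    · simp [SS_one]
    · rw [SS_ge_two (m+2) (by omega)]
      simp
  have hh : HasSum (fun n : ℕ => (if n = 0 then (1:ℝ) else 0) + (if n = 1 then (-t) else 0))
      (1 + (-t)) := (hasSum_ite_eq 0 1).add (hasSum_ite_eq 1 (-t))
  simp_rw [hfun]
  rw [hh.tsum_eq]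
  ring

lemma g_pos {t : ℝ} (ht : |t| ≤ 1/2) : (1:ℝ)/2 ≤ ∑' p : ℕ, aa p * t^p := by
  have ht1 : |t| < 1 := lt_of_le_of_lt ht (by norm_num)
  have hsum := aa_summable ht1
  rw [hsum.tsum_eq_zero_add]
  have h0 : aa 0 * t^0 = 1 := by rw [aa_zero]; ring
  rw [h0]
  have hgeo : HasSum (fun p : ℕ => (1/4 : ℝ) * (1/2)^p) ((1/4) * 2) := by
    have := (hasSum_geometric_of_lt_one (by norm_num : (0:ℝ) ≤ 1/2)
      (by norm_num : (1/2:ℝ) < 1)).mul_left (1/4)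
    norm_num at this ⊢
    exact this
  have hb : ‖∑' p : ℕ, aa (p+1) * t^(p+1)‖ ≤ (1/4 : ℝ) * 2 := by
    apply tsum_of_norm_bounded hgeo
    intro p
    rw [Real.norm_eq_abs, abs_mul, abs_pow]
    have h1 : |aa (p+1)| ≤ 1/2 := (aa_bounds (p+1)).2 (by omega)
    have h2 : |t|^(p+1) ≤ (1/2)^(p+1) := pow_le_pow_left₀ (abs_nonneg t) ht _
    calc |aa (p+1)| * |t|^(p+1) ≤ (1/2) * (1/2)^(p+1) := by
          apply mul_le_mul h1 h2 (by positivity) (by norm_num)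
      _ = (1/4) * (1/2)^p := by ring
  rw [Real.norm_eq_abs] at hb
  have := (abs_le.mp hb).1
  linarith

lemma g_eq_sqrt {t : ℝ} (ht : |t| ≤ 1/2) :
    HasSum (fun p : ℕ => aa p * t^p) (Real.sqrt (1 - t)) := by
  have ht1 : |t| < 1 := lt_of_le_of_lt ht (by norm_num)
  have hG := (aa_summable ht1).hasSum
  have hnn : 0 ≤ ∑' p : ℕ, aa p * t^p := by linarith [g_pos ht]
  have : Real.sqrt (1 - t) = ∑' p : ℕ, aa p * t^p := by
    rw [← g_sq ht, Real.sqrt_mul_self hnn]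
  rwa [this]

/-- the coefficients of the power series expansion of `W_λ` around `0`
are the `w_λ(p)` above. -/
theorem stmt_3 (h : ℝ) (hh : h ∈ Set.Ioc (0 : ℝ) (1/4)) (lam : ℝ)
    (hlam : lam = h / (1 + 8*h) ^ ((3 : ℝ)/2)) :
    ∃ ε > 0, ∀ x : ℝ, |x| < ε →
      HasSum (fun p : ℕ => wcoef h p * x ^ p) (Wfun h lam x) := by
  obtain ⟨hpos, hle⟩ := hh
  subst hlam
  have h8 : (0:ℝ) < 1 + 8*h := by linarith
  have hs0 : 0 < Real.sqrt (1 + 8*h) := Real.sqrt_pos.mpr h8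
  have hs2 : Real.sqrt (1 + 8*h) * Real.sqrt (1 + 8*h) = 1 + 8*h := Real.mul_self_sqrt h8.le
  have hrpow : (1 + 8*h) ^ ((3 : ℝ)/2) = (1 + 8*h) * Real.sqrt (1 + 8*h) := by
    rw [show (3:ℝ)/2 = 1 + 1/2 by norm_num, Real.rpow_add h8, Real.rpow_one,
      Real.sqrt_eq_rpow]
  set lam : ℝ := h / (1 + 8*h) ^ ((3 : ℝ)/2) with hlamdef
  have hlam : lam = h / ((1 + 8*h) * Real.sqrt (1 + 8*h)) := by rw [hlamdef, hrpow]
  have hlam0 : lam ≠ 0 := by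
    rw [hlam]; positivity
  refine ⟨1/(8*(1+8*h)), by positivity, ?_⟩
  intro x hx
  have habs : |4*(1+8*h)*x| ≤ 1/2 := by
    rw [abs_mul, abs_of_pos (by positivity : (0:ℝ) < 4*(1+8*h))]
    have : |x| < 1/(8*(1+8*h)) := hx
    have h1 : 4*(1+8*h) * |x| ≤ 4*(1+8*h) * (1/(8*(1+8*h))) := by nlinarith [abs_nonneg x]
    calc 4*(1+8*h) * |x| ≤ 4*(1+8*h) * (1/(8*(1+8*h))) := h1
      _ = 1/2 := by field_simp; ring
  have hA := g_eq_sqrt habs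
  set t : ℝ := 4*(1+8*h)*x with htdef
  have h1 : HasSum (fun p : ℕ => (lam/2) * (aa p * t^p))
      ((lam/2) * Real.sqrt (1 - t)) := hA.mul_left _
  set B : ℕ → ℝ := fun p => if p = 0 then 0 else aa (p-1) * t^(p-1) with hBdef
  have hBshift : (fun n : ℕ => B (n+1)) = fun n : ℕ => aa n * t^n := by
    funext n; simp [hBdef]
  have hB : HasSum B (Real.sqrt (1 - t)) := by
    have h2 : HasSum (fun n : ℕ => B (n+1)) (Real.sqrt (1 - t)) := by
      rw [hBshift]; exact hA
    have h3 := (hasSum_nat_add_iff (f := B) 1).mp h2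
    simpa [hBdef] using h3
  have hB2 := hB.mul_left (-(lam*((1+8*h)/h)/2)*x)
  have hC : HasSum (fun p : ℕ =>
      (if p = 0 then (-(lam/2)) else 0) + (if p = 1 then x/2 else 0))
      (-(lam/2) + x/2) := (hasSum_ite_eq 0 _).add (hasSum_ite_eq 1 _)
  have hT := (h1.add hB2).add hC
  have hW : (lam/2) * Real.sqrt (1 - t) + (-(lam*((1+8*h)/h)/2)*x) * Real.sqrt (1 - t)
      + (-(lam/2) + x/2) = Wfun h lam x := by
    rw [Wfun, htdef]
    have hh0 : h ≠ 0 := ne_of_gt hpos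
    have e1 : 1 - 4*(1+8*h)*x = 1 - t := by rw [htdef]
    field_simp
    ring
  rw [← hW]
  have hfun : (fun p : ℕ => (lam/2) * (aa p * t^p) + (-(lam*((1+8*h)/h)/2)*x) * B p
      + ((if p = 0 then (-(lam/2)) else 0) + (if p = 1 then x/2 else 0)))
      = fun p : ℕ => wcoef h p * x ^ p := by
    funext p
    have hh0 : h ≠ 0 := ne_of_gt hpos
    rcases p with _ | _ | m
    · simp [hBdef, wcoef, aa_zero]
    · simp only [hBdef, wcoef]
      norm_num [aa_one, aa_zero]
      rw [hlam, htdef]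
      field_simp
      ring
    · have hm2 : (m+2 : ℕ) ≠ 0 := by omega
      have hm1 : (m+2 : ℕ) ≠ 1 := by omega
      simp only [hBdef, wcoef, if_neg hm2, if_neg hm1]
      norm_num
      have hif : (if m+2 = 2 then (1:ℝ) else (Nat.doubleFactorial (2*(m+2) - 5) : ℝ))
          = (Nat.doubleFactorial (2*(m+2) - 5) : ℝ) := by
        rcases m with _ | m'
        · norm_num [Nat.doubleFactorial]
        · rw [if_neg (by omega)]
      rw [hif]
      have hc1 : aa (m+2) = -((Nat.doubleFactorial (2*(m+2)-3) : ℝ)) / (2^(m+2) * (Nat.factorial (m+2))) := aa_closed (m+2) (by omega)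
      have hc2 : aa (m+1) = -((Nat.doubleFactorial (2*(m+1)-3) : ℝ)) / (2^(m+1) * (Nat.factorial (m+1))) := aa_closed (m+1) (by omega)
      have hd1 : Nat.doubleFactorial (2*(m+2)-3) = (2*m+1) * Nat.doubleFactorial (2*(m+2)-5) := by
        rcases m with _ | m'
        · simp [Nat.doubleFactorial]
        · have e1 : 2*(m'+1+2)-3 = (2*m'+1)+2 := by omega
          have e2 : 2*(m'+1+2)-5 = 2*m'+1 := by omega
          rw [e1, e2, Nat.doubleFactorial_add_two]
          congr 1
      have hd2 : 2*(m+1)-3 = 2*(m+2)-5 := by omega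
      rw [hc1, hc2, hd1, hd2]
      simp only [show m+1+1 = m+2 from rfl]
      rw [hlam, htdef, hrpow]
      have hfact : (Nat.factorial (m+2) : ℝ) = ((m:ℝ)+2) * (Nat.factorial (m+1)) := by
        rw [Nat.factorial_succ]; push_cast; ring
      have hp1 : (4*(1+8*h)*x)^(m+2) = (2:ℝ)^(m+2) * (2+16*h)^(m+2) * x^(m+2) := by
        rw [show (4*(1+8*h)*x) = 2*(2+16*h)*x by ring, mul_pow, mul_pow]
      have hp2 : (4*(1+8*h)*x)^(m+1) = (2:ℝ)^(m+1) * (2+16*h)^(m+1) * x^(m+1) := by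
        rw [show (4*(1+8*h)*x) = 2*(2+16*h)*x by ring, mul_pow, mul_pow]
      rw [hfact, hp1, hp2]
      have hfm1 : (Nat.factorial (m+1) : ℝ) ≠ 0 := Nat.cast_ne_zero.mpr (Nat.factorial_ne_zero _)
      have hm20 : ((m:ℝ)+2) ≠ 0 := by positivity
      have h2p : (2:ℝ)^(m+2) ≠ 0 := by positivity
      have h2p1 : (2:ℝ)^(m+1) ≠ 0 := by positivity
      have hsne : Real.sqrt (1+8*h) ≠ 0 := ne_of_gt hs0
      have h8ne : (1+8*h : ℝ) ≠ 0 := ne_of_gt h8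
      push_cast
      field_simp
      ring
  rw [← hfun]
  exact hT
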